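/- Let d ≥ 2 and let G be a SIC POVM on ℂ^d. Then there exist three d-partitions c₁, c₂, c₃ : Fin (d²) → Fin d, inducing pairwise distinct partitions and pairwise sharing the 1-overlap property, such that the three marginal POVMs E^k(ν) = Σ_{i : c_k i = ν} G i (k = 1,2,3) are pairwise mutually unbiased: Tr(E^k(ν) · E^ℓ(μ)) = 1/d for all k ≠ ℓ and all ν, μ ∈ Fin d. -/

import Mathlib

open Matrix Finset
open scoped ComplexOrder

/-- A SIC POVM on `ℂ^d`. -/
def IsSICPOVM (d : ℕ) (G : Fin (d ^ 2) → Matrix (Fin d) (Fin d) ℂ) : Prop :=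
  (∀ i, (G i).PosSemidef) ∧ (∑ i, G i = 1) ∧
    (∀ i j, i ≠ j → (G i * G j).trace = 1 / ((d : ℂ) ^ 2 * ((d : ℂ) + 1))) ∧
    (∀ i, (G i * G i).trace = 1 / (d : ℂ) ^ 2)

/-- A `d`-partition of a finite type with `d²` elements: every fiber has cardinality `d`. -/
def IsDPartition {S : Type*} [Fintype S] [DecidableEq S] (d : ℕ) (c : S → Fin d) : Prop :=
  ∀ ν, (Finset.univ.filter fun a => c a = ν).card = d

/-- Two `d`-partitions share the 1-overlap property. -/
def OneOverlap {S : Type*} [Fintype S] [DecidableEq S] {d : ℕ} (c c' : S → Fin d) : Prop :=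
  ∀ ν μ, (Finset.univ.filter fun a => c a = ν ∧ c' a = μ).card = 1

/-- Two functions `c, c'` induce the same partition into fibers. -/
def SameFibers {S : Type*} {d : ℕ} (c c' : S → Fin d) : Prop :=
  ∀ a b, c a = c b ↔ c' a = c' b

/-- Auxiliary: the three partitioning functions on `Fin d × Fin d`. -/
def trip (d : ℕ) [NeZero d] : Fin 3 → Fin d × Fin d → Fin d
  | 0 => Prod.fst
  | 1 => Prod.snd
  | 2 => fun p => p.1 + p.2

@[simp] theorem trip_mk0 (d : ℕ) [NeZero d] (h : 0 < 3) : trip d ⟨0, h⟩ = Prod.fst := rfl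
@[simp] theorem trip_mk1 (d : ℕ) [NeZero d] (h : 1 < 3) : trip d ⟨1, h⟩ = Prod.snd := rfl
@[simp] theorem trip_mk2 (d : ℕ) [NeZero d] (h : 2 < 3) :
    trip d ⟨2, h⟩ = fun p => p.1 + p.2 := rfl

theorem card_filter_equiv {α β : Type*} [Fintype α] [Fintype β] [DecidableEq α] [DecidableEq β]
    (e : α ≃ β) (P : β → Prop) [DecidablePred P] :
    (Finset.univ.filter fun a => P (e a)).card = (Finset.univ.filter P).card := by
  apply Finset.card_bij (fun a _ => e a)
  · intro a ha; simp only [mem_filter, mem_univ, true_and] at ha ⊢; exact ha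
  · intro a _ b _ h; exact e.injective h
  · intro b hb
    refine ⟨e.symm b, ?_, by simp⟩
    simp only [mem_filter, mem_univ, true_and, Equiv.apply_symm_apply] at hb ⊢
    exact hb

theorem fiber_fst {d : ℕ} [NeZero d] (ν : Fin d) :
    (Finset.univ.filter fun p : Fin d × Fin d => p.1 = ν).card = d := by
  have h : (Finset.univ.filter fun p : Fin d × Fin d => p.1 = ν)
      = {ν} ×ˢ Finset.univ := by
    ext ⟨x, y⟩; simp [Finset.mem_product, eq_comm]
  rw [h, Finset.card_product]; simp

theorem fiber_snd {d : ℕ} [NeZero d] (ν : Fin d) :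
    (Finset.univ.filter fun p : Fin d × Fin d => p.2 = ν).card = d := by
  have h : (Finset.univ.filter fun p : Fin d × Fin d => p.2 = ν)
      = Finset.univ ×ˢ {ν} := by
    ext ⟨x, y⟩; simp [Finset.mem_product, eq_comm]
  rw [h, Finset.card_product]; simp

theorem fiber_add {d : ℕ} [NeZero d] (ν : Fin d) :
    (Finset.univ.filter fun p : Fin d × Fin d => p.1 + p.2 = ν).card = d := by
  have h : (Finset.univ.filter fun p : Fin d × Fin d => p.1 + p.2 = ν)
      = Finset.univ.image (fun x : Fin d => (x, ν - x)) := by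
    ext ⟨x, y⟩
    simp only [mem_filter, mem_univ, true_and, Finset.mem_image, Prod.mk.injEq]
    constructor
    · intro hxy; exact ⟨x, rfl, by rw [← hxy]; abel⟩
    · rintro ⟨i, rfl, rfl⟩; abel
  rw [h, Finset.card_image_of_injective _ (fun a b hab => congrArg Prod.fst hab),
    Finset.card_univ, Fintype.card_fin]

theorem stmt9 (d : ℕ) (hd : 2 ≤ d) (G : Fin (d ^ 2) → Matrix (Fin d) (Fin d) ℂ)
    (hG : IsSICPOVM d G) :
    ∃ c : Fin 3 → Fin (d ^ 2) → Fin d,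
      (∀ k, IsDPartition d (c k)) ∧
      (∀ k l, k ≠ l → ¬ SameFibers (c k) (c l)) ∧
      (∀ k l, k ≠ l → OneOverlap (c k) (c l)) ∧
      (∀ k l, k ≠ l → ∀ ν μ : Fin d,
        ((∑ i ∈ Finset.univ.filter fun i => c k i = ν, G i) *
          (∑ i ∈ Finset.univ.filter fun i => c l i = μ, G i)).trace = 1 / (d : ℂ)) := by
  haveI : NeZero d := ⟨by omega⟩
  obtain ⟨e⟩ : Nonempty (Fin (d ^ 2) ≃ Fin d × Fin d) :=
    ⟨(finCongr (pow_two d)).trans finProdFinEquiv.symm⟩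
  obtain ⟨z, o, hzo⟩ : ∃ z o : Fin d, z ≠ o :=
    ⟨⟨0, by omega⟩, ⟨1, by omega⟩, by simp [Fin.ext_iff]⟩
  obtain ⟨-, -, hoff, hdiag⟩ := hG
  have hd0 : (d : ℂ) ≠ 0 := Nat.cast_ne_zero.mpr (by omega)
  have hd1 : (d : ℂ) + 1 ≠ 0 := by
    have h' : ((d + 1 : ℕ) : ℂ) ≠ 0 := Nat.cast_ne_zero.mpr (by omega)
    push_cast at h'; exact h'
  -- fiber cardinalities
  have hfib : ∀ (k : Fin 3) (ν : Fin d),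
      (Finset.univ.filter fun i => trip d k (e i) = ν).card = d := by
    intro k ν
    rw [card_filter_equiv e (fun p => trip d k p = ν)]
    fin_cases k
    · simp only [trip_mk0]; exact fiber_fst ν
    · simp only [trip_mk1]; exact fiber_snd ν
    · simp only [trip_mk2]; exact fiber_add ν
  -- overlap cardinalities
  have hov : ∀ (k l : Fin 3), k ≠ l → ∀ ν μ : Fin d,
      (Finset.univ.filter fun i => trip d k (e i) = ν ∧ trip d l (e i) = μ).card = 1 := by
    intro k l hkl ν μ
    rw [card_filter_equiv e (fun p => trip d k p = ν ∧ trip d l p = μ)]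
    rw [Finset.card_eq_one]
    fin_cases k <;> fin_cases l <;>
      simp only [trip_mk0, trip_mk1, trip_mk2] <;> erw [Finset.filter_congr_decidable] <;> (try exact absurd rfl hkl)
    · exact ⟨(ν, μ), by ext ⟨x, y⟩; simp [Prod.ext_iff]⟩
    · refine ⟨(ν, μ - ν), ?_⟩
      ext ⟨x, y⟩
      simp only [mem_filter, mem_univ, true_and, mem_singleton, Prod.mk.injEq]
      constructor
      · rintro ⟨rfl, h2⟩; exact ⟨rfl, by rw [← h2]; abel⟩
      · rintro ⟨rfl, rfl⟩; exact ⟨rfl, by abel⟩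
    · exact ⟨(μ, ν), by ext ⟨x, y⟩; simp [Prod.ext_iff]; tauto⟩
    · refine ⟨(μ - ν, ν), ?_⟩
      ext ⟨x, y⟩
      simp only [mem_filter, mem_univ, true_and, mem_singleton, Prod.mk.injEq]
      constructor
      · rintro ⟨rfl, h2⟩; exact ⟨by rw [← h2]; abel, rfl⟩
      · rintro ⟨rfl, rfl⟩; exact ⟨rfl, by abel⟩
    · refine ⟨(μ, ν - μ), ?_⟩
      ext ⟨x, y⟩
      simp only [mem_filter, mem_univ, true_and, mem_singleton, Prod.mk.injEq]
      constructor
      · rintro ⟨h1, rfl⟩; exact ⟨rfl, by rw [← h1]; abel⟩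
      · rintro ⟨rfl, rfl⟩; exact ⟨by abel, rfl⟩
    · refine ⟨(ν - μ, μ), ?_⟩
      ext ⟨x, y⟩
      simp only [mem_filter, mem_univ, true_and, mem_singleton, Prod.mk.injEq]
      constructor
      · rintro ⟨h1, rfl⟩; exact ⟨by rw [← h1]; abel, rfl⟩
      · rintro ⟨rfl, rfl⟩; exact ⟨by abel, rfl⟩
  -- key trace computation
  have key : ∀ A B : Finset (Fin (d ^ 2)), A.card = d → B.card = d → (A ∩ B).card = 1 →
      ((∑ i ∈ A, G i) * (∑ j ∈ B, G j)).trace = 1 / (d : ℂ) := by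
    intro A B hA hB hAB
    rw [Finset.sum_mul_sum]
    simp only [Matrix.trace_sum]
    rw [← Finset.sum_product']
    have step : ∑ p ∈ A ×ˢ B, (G p.1 * G p.2).trace
        = ∑ p ∈ A ×ˢ B, (if p.1 = p.2 then 1 / (d : ℂ) ^ 2
            else 1 / ((d : ℂ) ^ 2 * ((d : ℂ) + 1))) := by
      refine Finset.sum_congr rfl fun p _ => ?_
      split_ifs with h
      · rw [h]; exact hdiag p.2
      · exact hoff p.1 p.2 h
    rw [step, Finset.sum_ite, Finset.sum_const, Finset.sum_const]
    have hdset : (A ×ˢ B).filter (fun p => p.1 = p.2)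
        = (A ∩ B).image (fun i => (i, i)) := by
      ext ⟨x, y⟩
      simp only [mem_filter, Finset.mem_product, Finset.mem_image, Finset.mem_inter,
        Prod.mk.injEq]
      constructor
      · rintro ⟨⟨hx, hy⟩, rfl⟩; exact ⟨x, ⟨hx, hy⟩, rfl, rfl⟩
      · rintro ⟨i, ⟨h1, h2⟩, rfl, rfl⟩; exact ⟨⟨h1, h2⟩, rfl⟩
    have hcard1 : ((A ×ˢ B).filter (fun p => p.1 = p.2)).card = 1 := by
      rw [hdset, Finset.card_image_of_injective _
        (fun a b hab => congrArg Prod.fst hab), hAB]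
    have hcard2 : ((A ×ˢ B).filter (fun p => ¬ p.1 = p.2)).card = d * d - 1 := by
      have htot := Finset.card_filter_add_card_filter_not
        (s := A ×ˢ B) (p := fun p => p.1 = p.2)
      rw [Finset.card_product, hA, hB, hcard1] at htot
      omega
    rw [hcard1, hcard2, nsmul_eq_mul, nsmul_eq_mul]
    have hdd : 1 ≤ d * d := by nlinarith
    push_cast [Nat.cast_sub hdd]
    field_simp
    ring
  refine ⟨fun k i => trip d k (e i), ?_, ?_, ?_, ?_⟩
  · intro k ν; exact hfib k ν
  · -- not SameFibers
    have nsf : ∀ (u v : Fin d × Fin d → Fin d) (a b : Fin d × Fin d), u a = u b → v a ≠ v b →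
        ¬ SameFibers (fun i => u (e i)) (fun i => v (e i)) := by
      intro u v a b h1 h2 hs
      have h3 := hs (e.symm a) (e.symm b)
      simp only [Equiv.apply_symm_apply] at h3
      exact h2 (h3.mp h1)
    intro k l hkl
    fin_cases k <;> fin_cases l <;> (try exact absurd rfl hkl)
    · exact nsf (trip d 0) (trip d 1) (z, z) (z, o) rfl hzo
    · exact nsf (trip d 0) (trip d 2) (z, z) (z, o) rfl
        (fun h => hzo (add_left_cancel (show z + z = z + o from h)))
    · exact nsf (trip d 1) (trip d 0) (z, z) (o, z) rfl hzo
    · exact nsf (trip d 1) (trip d 2) (z, z) (o, z) rfl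
        (fun h => hzo (add_right_cancel (show z + z = o + z from h)))
    · exact nsf (trip d 2) (trip d 0) (z, o) (o, z)
        (show z + o = o + z from add_comm z o) hzo
    · exact nsf (trip d 2) (trip d 1) (z, o) (o, z)
        (show z + o = o + z from add_comm z o) (Ne.symm hzo)
  · intro k l hkl ν μ; exact hov k l hkl ν μ
  · intro k l hkl ν μ
    refine key _ _ (hfib k ν) (hfib l μ) ?_
    rw [← Finset.filter_and]
    exact hov k l hkl ν μ
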